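/- Then for all 0 ≤ j, k ≤ n−1 the integral ∫₀^∞ P_j(x) Q_k(x) dx converges absolutely and equals δ_{j,k} (1 if j = k and 0 otherwise). -/

import Mathlib

open MeasureTheory Set


lemma beta_nat (a b : ℕ) :
    ∫ t in (0:ℝ)..1, t ^ a * (1 - t) ^ b
      = (Nat.factorial a * Nat.factorial b : ℝ) / Nat.factorial (a + b + 1) := by
  induction b generalizing a with
  | zero =>
      have hab : ((a:ℝ) + 1) ≠ 0 := by positivity
      simp [integral_pow, Nat.factorial_succ]
      field_simp
  | succ b ih =>
      have c1 : Continuous fun t : ℝ => t ^ a * (1 - t) ^ b := by continuity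
      have c2 : Continuous fun t : ℝ => t ^ (a+1) * (1 - t) ^ b := by continuity
      have key : ∀ t ∈ uIcc (0:ℝ) 1, t ^ a * (1 - t) ^ (b + 1)
          = t ^ a * (1 - t) ^ b - t ^ (a + 1) * (1 - t) ^ b := by
        intro t _; ring
      rw [intervalIntegral.integral_congr key,
        intervalIntegral.integral_sub (c1.intervalIntegrable _ _) (c2.intervalIntegrable _ _),
        ih a, ih (a+1)]
      have h1 : (a + (b+1) + 1) = (a + b + 1) + 1 := by ring
      have h2 : (a + 1 + b + 1) = (a + b + 1) + 1 := by ring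
      rw [h1, h2, Nat.factorial_succ (a+b+1), Nat.factorial_succ a, Nat.factorial_succ b]
      have hab : ((a+b+1).factorial : ℝ) ≠ 0 := Nat.cast_ne_zero.2 (Nat.factorial_ne_zero _)
      have hab2 : ((a+b+1 : ℕ) : ℝ) + 1 ≠ 0 := by positivity
      field_simp
      push_cast
      ring


lemma aux_pow_mul_integrable (m : ℕ) (q0 : ℝ → ℝ) (hq : Measurable q0)
    (hint : IntegrableOn (fun x => x ^ m * |q0 x|) (Ioi 0)) :
    IntegrableOn (fun y => y ^ m * q0 y) (Ioi 0) := by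
  refine hint.mono' ((measurable_id.pow_const m).mul hq).aestronglyMeasurable
    ((ae_restrict_iff' measurableSet_Ioi).2 (Filter.Eventually.of_forall fun y hy => ?_))
  rw [Real.norm_eq_abs, abs_mul, abs_of_nonneg (pow_nonneg (le_of_lt hy) m)]

lemma aux_key (m : ℕ) (f : ℝ → ℝ) (hf : IntegrableOn (fun y => y ^ m * f y) (Ioi 0))
    {t : ℝ} (ht : 0 < t) :
    IntegrableOn (fun x => x ^ m * f (x / t) / t) (Ioi 0) ∧
    ∫ x in Ioi (0:ℝ), x ^ m * f (x / t) / t = t ^ m * ∫ y in Ioi (0:ℝ), y ^ m * f y := by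
  have htm : (t:ℝ) ^ m ≠ 0 := pow_ne_zero _ ht.ne'
  set g : ℝ → ℝ := fun y => (t ^ m / t) * (y ^ m * f y) with hg
  have hgint : IntegrableOn g (Ioi 0) := hf.const_mul _
  have heq : ∀ x : ℝ, x ^ m * f (x / t) / t = g (t⁻¹ * x) := by
    intro x
    simp only [hg, inv_mul_eq_div, div_pow]
    field_simp
  constructor
  · have h1 := (integrableOn_Ioi_comp_mul_left_iff g 0 (inv_pos.2 ht)).2
      (by simpa using hgint)
    exact h1.congr_fun (fun x _ => (heq x).symm) measurableSet_Ioi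
  · rw [setIntegral_congr_fun measurableSet_Ioi (fun x _ => heq x),
      integral_comp_mul_left_Ioi g 0 (inv_pos.2 ht)]
    simp only [mul_zero, inv_inv, smul_eq_mul, hg, integral_const_mul]
    field_simp

lemma aux_core (ν μ m : ℕ) (hμ : 1 ≤ μ) (q0 : ℝ → ℝ) (hq : Measurable q0)
    (hint : IntegrableOn (fun x => x ^ m * |q0 x|) (Ioi 0)) :
    IntegrableOn (fun x => x ^ m *
        ∫ t in Ioo (0:ℝ) 1, t ^ ν * (1 - t) ^ (μ - 1) * q0 (x / t) / t) (Ioi 0) ∧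
    ∫ x in Ioi (0:ℝ), x ^ m * ∫ t in Ioo (0:ℝ) 1, t ^ ν * (1 - t) ^ (μ - 1) * q0 (x / t) / t
      = ((Nat.factorial (ν + m) * Nat.factorial (μ - 1) : ℝ) / Nat.factorial (ν + m + μ)) *
          ∫ y in Ioi (0:ℝ), y ^ m * q0 y := by
  have hq0m : IntegrableOn (fun y => y ^ m * q0 y) (Ioi 0) :=
    aux_pow_mul_integrable m q0 hq hint
  set H : ℝ × ℝ → ℝ :=
    fun z => z.1 ^ m * (z.2 ^ ν * (1 - z.2) ^ (μ - 1) * q0 (z.1 / z.2) / z.2) with hH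
  set M : Measure (ℝ × ℝ) :=
    (volume.restrict (Ioi (0:ℝ))).prod (volume.restrict (Ioo (0:ℝ) 1)) with hM
  have hHmeas : Measurable H := by
    apply (measurable_fst.pow_const m).mul
    exact (((measurable_snd.pow_const ν).mul
      ((measurable_const.sub measurable_snd).pow_const (μ - 1))).mul
      (hq.comp (measurable_fst.div measurable_snd))).div measurable_snd
  set J : ℝ := ∫ y in Ioi (0:ℝ), y ^ m * |q0 y| with hJ
  set I : ℝ := ∫ y in Ioi (0:ℝ), y ^ m * q0 y with hI
  have hmain : Integrable H M := by
    rw [hM, integrable_prod_iff' hHmeas.aestronglyMeasurable]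
    constructor
    · refine (ae_restrict_iff' measurableSet_Ioo).2 (Filter.Eventually.of_forall fun t ht => ?_)
      have h1 := ((aux_key m q0 hq0m ht.1).1).const_mul (t ^ ν * (1 - t) ^ (μ - 1))
      exact IntegrableOn.congr_fun h1 (fun x _ => by simp only [hH]; ring) measurableSet_Ioi
    · have hcont : Continuous (fun t : ℝ => t ^ (ν + m) * (1 - t) ^ (μ - 1) * J) := by
        continuity
      have hbig : IntegrableOn (fun t : ℝ => t ^ (ν + m) * (1 - t) ^ (μ - 1) * J) (Ioo 0 1) :=
        (hcont.integrableOn_Icc (a := 0) (b := 1)).mono_set Ioo_subset_Icc_self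
      refine hbig.congr_fun (fun t ht => ?_) measurableSet_Ioo
      have habs : ∀ x ∈ Ioi (0:ℝ),
          ‖H (x, t)‖ = (t ^ ν * (1 - t) ^ (μ - 1)) * (x ^ m * |q0 (x / t)| / t) := by
        intro x hx
        rw [Real.norm_eq_abs]
        simp only [hH]
        rw [abs_mul, abs_of_nonneg (pow_nonneg (le_of_lt hx) m), abs_div,
          abs_of_pos ht.1, abs_mul,
          abs_of_nonneg (mul_nonneg (pow_nonneg ht.1.le ν) (pow_nonneg (by linarith [ht.2] : (0:ℝ) ≤ 1 - t) (μ - 1)))]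
        ring
      rw [setIntegral_congr_fun measurableSet_Ioi habs, integral_const_mul,
        (aux_key m (fun y => |q0 y|) hint ht.1).2, ← hJ]
      beta_reduce
      rw [pow_add]
      ring
  have hfub1 := integral_prod H hmain
  have hfub2 := integral_prod_symm H hmain
  have hrw : (fun x => ∫ t in Ioo (0:ℝ) 1, H (x, t)) =
      fun x => x ^ m * ∫ t in Ioo (0:ℝ) 1, t ^ ν * (1 - t) ^ (μ - 1) * q0 (x / t) / t := by
    funext x
    simp only [hH]
    exact integral_const_mul _ _
  constructor
  · have h2 : IntegrableOn (fun x => ∫ t in Ioo (0:ℝ) 1, H (x, t)) (Ioi 0) :=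
      hmain.integral_prod_left
    exact IntegrableOn.congr_fun h2 (fun x _ => congrFun hrw x) measurableSet_Ioi
  · have hleft : ∫ x in Ioi (0:ℝ),
        x ^ m * ∫ t in Ioo (0:ℝ) 1, t ^ ν * (1 - t) ^ (μ - 1) * q0 (x / t) / t
        = ∫ z, H z ∂M := by
      rw [hfub1, ← hrw]
    rw [hleft, hfub2]
    have hstep : ∀ t ∈ Ioo (0:ℝ) 1,
        ∫ x in Ioi (0:ℝ), H (x, t) = t ^ (ν + m) * (1 - t) ^ (μ - 1) * I := by
      intro t ht
      have h1 : ∀ x ∈ Ioi (0:ℝ), H (x, t)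
          = (t ^ ν * (1 - t) ^ (μ - 1)) * (x ^ m * q0 (x / t) / t) := by
        intro x _
        simp only [hH]; ring
      rw [setIntegral_congr_fun measurableSet_Ioi h1, integral_const_mul,
        (aux_key m q0 hq0m ht.1).2, ← hI, pow_add]
      ring
    rw [setIntegral_congr_fun measurableSet_Ioo hstep, integral_mul_const]
    congr 1
    have hIoo : ∫ t in Ioo (0:ℝ) 1, t ^ (ν + m) * (1 - t) ^ (μ - 1)
        = ∫ t in (0:ℝ)..1, t ^ (ν + m) * (1 - t) ^ (μ - 1) := by
      rw [intervalIntegral.integral_of_le (by norm_num : (0:ℝ) ≤ 1),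
        ← integral_Ioc_eq_integral_Ioo]
    rw [hIoo, beta_nat (ν + m) (μ - 1)]
    have : ν + m + (μ - 1) + 1 = ν + m + μ := by omega
    rw [this]

/-- Biorthogonality of the transformed system `(P_k, Q_k)` arising from
multiplication by a truncated Haar unitary matrix with parameters `ν, μ`:
`P_k(x) = (1/(μ-1)!) Σ_j ((j+ν+μ)!/(j+ν)!) a_{j,k} x^j` and `Q_k` is the
Mellin convolution of `q_k` with the Beta density `t^ν (1-t)^{μ-1}` on `(0,1)`. -/
theorem stmt11
    (n : ℕ) (hn : 1 ≤ n) (ν μ : ℕ) (hμ : 1 ≤ μ)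
    (a : ℕ → ℕ → ℝ) (ha : ∀ k < n, a k k ≠ 0)
    (p : ℕ → ℝ → ℝ)
    (hp : ∀ k < n, ∀ x : ℝ, p k x = ∑ j ∈ Finset.range (k + 1), a j k * x ^ j)
    (q : ℕ → ℝ → ℝ) (hqmeas : ∀ k < n, Measurable (q k))
    (hqint : ∀ k < n, ∀ j < n, IntegrableOn (fun x => x ^ j * |q k x|) (Ioi 0))
    (hbiorth : ∀ j < n, ∀ k < n,
      ∫ x in Ioi (0:ℝ), p j x * q k x = if j = k then 1 else 0)
    (P : ℕ → ℝ → ℝ)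
    (hP : ∀ k < n, ∀ x : ℝ, P k x = (Nat.factorial (μ - 1) : ℝ)⁻¹ *
      ∑ j ∈ Finset.range (k + 1),
        (Nat.factorial (j + ν + μ) : ℝ) / (Nat.factorial (j + ν) : ℝ) * a j k * x ^ j)
    (Q : ℕ → ℝ → ℝ)
    (hQ : ∀ k < n, ∀ y ∈ Ioi (0:ℝ),
      Q k y = ∫ t in Ioo (0:ℝ) 1, t ^ ν * (1 - t) ^ (μ - 1) * q k (y / t) / t) :
    ∀ j < n, ∀ k < n,
      IntegrableOn (fun x => P j x * Q k x) (Ioi 0) ∧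
      ∫ x in Ioi (0:ℝ), P j x * Q k x = if j = k then 1 else 0 := by
  intro j hj k hk
  -- coefficients
  set c : ℕ → ℝ := fun m => (Nat.factorial (μ - 1) : ℝ)⁻¹ *
      ((Nat.factorial (m + ν + μ) : ℝ) / (Nat.factorial (m + ν) : ℝ) * a m j) with hc
  set B : ℕ → ℝ := fun m =>
      (Nat.factorial (ν + m) * Nat.factorial (μ - 1) : ℝ) / Nat.factorial (ν + m + μ) with hB
  have hmem : ∀ m ∈ Finset.range (j + 1), m < n := fun m hm =>
    lt_of_le_of_lt (Nat.lt_succ_iff.1 (Finset.mem_range.1 hm)) hj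
  -- core facts for each monomial
  have hcore : ∀ m < n, IntegrableOn (fun x => x ^ m * Q k x) (Ioi 0) ∧
      ∫ x in Ioi (0:ℝ), x ^ m * Q k x = B m * ∫ y in Ioi (0:ℝ), y ^ m * q k y := by
    intro m hm
    have h1 := aux_core ν μ m hμ (q k) (hqmeas k hk) (hqint k hk m hm)
    constructor
    · exact IntegrableOn.congr_fun h1.1 (fun x hx => by rw [← hQ k hk x hx]) measurableSet_Ioi
    · rw [setIntegral_congr_fun measurableSet_Ioi
        (fun x (hx : x ∈ Ioi (0:ℝ)) => by rw [hQ k hk x hx]), h1.2]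
  -- pointwise expansion of P j * Q k on Ioi 0
  have hPexp : ∀ x : ℝ, P j x * Q k x
      = ∑ m ∈ Finset.range (j + 1), c m * (x ^ m * Q k x) := by
    intro x
    rw [hP j hj x, Finset.mul_sum, Finset.sum_mul]
    refine Finset.sum_congr rfl fun m _ => ?_
    simp only [hc]; ring
  have hIntSum : IntegrableOn
      (fun x => ∑ m ∈ Finset.range (j + 1), c m * (x ^ m * Q k x)) (Ioi 0) :=
    integrable_finset_sum _ fun m hm => ((hcore m (hmem m hm)).1.const_mul _)
  have hInt : IntegrableOn (fun x => P j x * Q k x) (Ioi 0) :=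
    IntegrableOn.congr_fun hIntSum (fun x _ => (hPexp x).symm) measurableSet_Ioi
  refine ⟨hInt, ?_⟩
  have hfac : ∀ m : ℕ, c m * B m = a m j := by
    intro m
    have e1 : ν + m = m + ν := Nat.add_comm _ _
    have e2 : ν + m + μ = m + ν + μ := by omega
    have f1 : (Nat.factorial (m + ν) : ℝ) ≠ 0 := Nat.cast_ne_zero.2 (Nat.factorial_ne_zero _)
    have f2 : (Nat.factorial (μ - 1) : ℝ) ≠ 0 := Nat.cast_ne_zero.2 (Nat.factorial_ne_zero _)
    have f3 : (Nat.factorial (m + ν + μ) : ℝ) ≠ 0 := Nat.cast_ne_zero.2 (Nat.factorial_ne_zero _)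
    simp only [hc, hB, e1, e2]
    field_simp
  calc ∫ x in Ioi (0:ℝ), P j x * Q k x
      = ∫ x in Ioi (0:ℝ), ∑ m ∈ Finset.range (j + 1), c m * (x ^ m * Q k x) := by
        exact setIntegral_congr_fun measurableSet_Ioi fun x _ => hPexp x
    _ = ∑ m ∈ Finset.range (j + 1), ∫ x in Ioi (0:ℝ), c m * (x ^ m * Q k x) :=
        integral_finset_sum _ fun m hm => ((hcore m (hmem m hm)).1.const_mul _)
    _ = ∑ m ∈ Finset.range (j + 1), a m j * ∫ y in Ioi (0:ℝ), y ^ m * q k y := by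
        refine Finset.sum_congr rfl fun m hm => ?_
        rw [integral_const_mul, (hcore m (hmem m hm)).2, ← mul_assoc, hfac m]
    _ = ∑ m ∈ Finset.range (j + 1), ∫ y in Ioi (0:ℝ), a m j * (y ^ m * q k y) := by
        refine Finset.sum_congr rfl fun m hm => ?_
        rw [integral_const_mul]
    _ = ∫ y in Ioi (0:ℝ), ∑ m ∈ Finset.range (j + 1), a m j * (y ^ m * q k y) :=
        (integral_finset_sum _ fun m hm =>
          ((aux_pow_mul_integrable m (q k) (hqmeas k hk) (hqint k hk m (hmem m hm))).const_mul _)).symm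
    _ = ∫ y in Ioi (0:ℝ), p j y * q k y := by
        refine setIntegral_congr_fun measurableSet_Ioi fun y _ => ?_
        rw [hp j hj y, Finset.sum_mul]
        exact (Finset.sum_congr rfl fun m _ => by ring)
    _ = if j = k then 1 else 0 := hbiorth j hj k hk
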